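/- Let P be a d×d substochastic matrix (nonnegative entries, row sums at most 1) such that I - P is invertible. Then the matrix R = I - Pᵗ is a completely-𝒮 matrix: every principal submatrix A of R admits a strictly positive vector v with Av > 0. -/

import Mathlib

open Matrix Finset

section aux
set_option linter.unusedSectionVars false
variable {ι : Type*} [Fintype ι] [DecidableEq ι] (Q : Matrix ι ι ℝ)

/-- row sums of powers -/
noncomputable def rsum (n : ℕ) (i : ι) : ℝ := ∑ j, (Q ^ n) i j

lemma pow_nn (hnn : ∀ i j, 0 ≤ Q i j) : ∀ n i j, 0 ≤ (Q ^ n) i j := by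
  intro n
  induction n with
  | zero => intro i j; simp [Matrix.one_apply]; positivity
  | succ n ih =>
      intro i j
      rw [pow_succ, Matrix.mul_apply]
      exact Finset.sum_nonneg fun k _ => mul_nonneg (ih i k) (hnn k j)

lemma rsum_zero (i : ι) : rsum Q 0 i = 1 := by
  simp [rsum, Matrix.one_apply]

lemma rsum_add (a b : ℕ) (i : ι) :
    rsum Q (a + b) i = ∑ m, (Q ^ a) i m * rsum Q b m := by
  simp only [rsum, pow_add, Matrix.mul_apply]
  rw [Finset.sum_comm]
  simp [Finset.mul_sum]

lemma rsum_le_one (hnn : ∀ i j, 0 ≤ Q i j) (hrow : ∀ i, rsum Q 1 i ≤ 1) :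
    ∀ n i, rsum Q n i ≤ 1 := by
  intro n
  induction n with
  | zero => intro i; simp [rsum_zero]
  | succ n ih =>
      intro i
      have : (1 : ℕ) + n = n + 1 := by omega
      rw [← this, rsum_add]
      calc ∑ m, (Q ^ 1) i m * rsum Q n m ≤ ∑ m, (Q ^ 1) i m * 1 := by
            apply Finset.sum_le_sum
            intro m _
            exact mul_le_mul_of_nonneg_left (ih m) (pow_nn Q hnn 1 i m)
        _ = rsum Q 1 i := by simp [rsum]
        _ ≤ 1 := hrow i

lemma rsum_nonneg (hnn : ∀ i j, 0 ≤ Q i j) (n : ℕ) (i : ι) : 0 ≤ rsum Q n i :=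
  Finset.sum_nonneg fun j _ => pow_nn Q hnn n i j

lemma rsum_anti (hnn : ∀ i j, 0 ≤ Q i j) (hrow : ∀ i, rsum Q 1 i ≤ 1)
    (a b : ℕ) (hab : a ≤ b) (i : ι) : rsum Q b i ≤ rsum Q a i := by
  obtain ⟨c, rfl⟩ := Nat.exists_eq_add_of_le hab
  calc rsum Q (a + c) i = ∑ m, (Q ^ a) i m * rsum Q c m := rsum_add Q a c i
    _ ≤ ∑ m, (Q ^ a) i m * 1 := Finset.sum_le_sum fun m _ =>
        mul_le_mul_of_nonneg_left (rsum_le_one Q hnn hrow c m) (pow_nn Q hnn a i m)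
    _ = rsum Q a i := by simp [rsum]

/-- column sums of powers -/
noncomputable def csum (n : ℕ) (j : ι) : ℝ := ∑ i, (Q ^ n) i j

lemma aux_main [Nonempty ι] (hnn : ∀ i j, 0 ≤ Q i j) (hrow : ∀ i, ∑ j, Q i j ≤ 1)
    (hleak : ∀ i, ∃ n, rsum Q n i < 1) :
    ∃ v : ι → ℝ, (∀ i, 0 < v i) ∧ ∀ i, 0 < v i - ∑ j, Q j i * v j := by
  have hrow1 : ∀ i, rsum Q 1 i ≤ 1 := by intro i; simpa [rsum] using hrow i
  choose nf hnf using hleak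
  set N := Finset.univ.sup nf with hN
  have hNleak : ∀ i, rsum Q N i < 1 := fun i =>
    lt_of_le_of_lt (rsum_anti Q hnn hrow1 (nf i) N (Finset.le_sup (Finset.mem_univ i)) i) (hnf i)
  set c := Finset.univ.sup' Finset.univ_nonempty (rsum Q N) with hc
  have hcle : ∀ i, rsum Q N i ≤ c := fun i => Finset.le_sup' _ (Finset.mem_univ i)
  have hclt : c < 1 := by
    rw [hc, Finset.sup'_lt_iff]
    intro i _; exact hNleak i
  have hc0 : 0 ≤ c := le_trans (rsum_nonneg Q hnn N (Classical.arbitrary ι)) (hcle _)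
  have hN1 : 1 ≤ N := by
    rcases Nat.eq_zero_or_pos N with h | h
    · exfalso
      have hh := hNleak (Classical.arbitrary ι)
      rw [h, rsum_zero] at hh
      linarith
    · exact h
  have hpowk : ∀ k i, rsum Q (N * k) i ≤ c ^ k := by
    intro k
    induction k with
    | zero => intro i; simp [rsum_zero]
    | succ k ih =>
        intro i
        have : N * (k + 1) = N + N * k := by ring
        rw [this, rsum_add]
        calc ∑ m, (Q ^ N) i m * rsum Q (N * k) m
            ≤ ∑ m, (Q ^ N) i m * c ^ k := Finset.sum_le_sum fun m _ =>
              mul_le_mul_of_nonneg_left (ih m) (pow_nn Q hnn N i m)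
          _ = rsum Q N i * c ^ k := by rw [rsum, Finset.sum_mul]
          _ ≤ c * c ^ k := mul_le_mul_of_nonneg_right (hcle i) (by positivity)
          _ = c ^ (k + 1) := by ring
  set m : ℕ := Fintype.card ι with hm
  have hm1 : 1 ≤ m := Fintype.card_pos
  obtain ⟨k, hk⟩ : ∃ k, (m : ℝ) * c ^ k < 1 := by
    obtain ⟨k, hk⟩ := exists_pow_lt_of_lt_one (show (0:ℝ) < 1 / (m + 1) by positivity) hclt
    refine ⟨k, ?_⟩
    have h1 : (m : ℝ) * c ^ k ≤ (m : ℝ) * (1 / (m + 1)) := by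
      apply mul_le_mul_of_nonneg_left hk.le (by positivity)
    have h2 : (m : ℝ) * (1 / (m + 1)) < 1 := by
      rw [mul_one_div, div_lt_one (by positivity)]
      linarith
    linarith
  have hk1 : k ≠ 0 := by
    intro h
    rw [h] at hk; simp at hk
    have : (1:ℝ) ≤ (m:ℝ) := by exact_mod_cast hm1
    linarith
  set L := N * k with hL
  have hL1 : 1 ≤ L := Nat.mul_pos (by omega) (Nat.pos_of_ne_zero hk1)
  have hcol : ∀ j, csum Q L j < 1 := by
    intro j
    have hentry : ∀ i, (Q ^ L) i j ≤ c ^ k := fun i =>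
      le_trans (Finset.single_le_sum (fun l _ => pow_nn Q hnn L i l) (Finset.mem_univ j))
        (hpowk k i)
    calc csum Q L j ≤ ∑ _i : ι, c ^ k := Finset.sum_le_sum fun i _ => hentry i
      _ = (m : ℝ) * c ^ k := by simp [hm, mul_comm]
      _ < 1 := hk
  have hcsum_nn : ∀ n j, 0 ≤ csum Q n j := fun n j =>
    Finset.sum_nonneg fun i _ => pow_nn Q hnn n i j
  have hcsum0 : ∀ j, csum Q 0 j = 1 := by intro j; simp [csum, Matrix.one_apply]
  refine ⟨fun j => ∑ n ∈ Finset.range L, csum Q n j, ?_, ?_⟩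
  · intro j
    have : csum Q 0 j ≤ ∑ n ∈ Finset.range L, csum Q n j :=
      Finset.single_le_sum (fun n _ => hcsum_nn n j) (Finset.mem_range.mpr (by omega))
    rw [hcsum0] at this
    linarith
  · intro i
    have hswap : ∑ j, Q j i * ∑ n ∈ Finset.range L, csum Q n j
        = ∑ n ∈ Finset.range L, csum Q (n + 1) i := by
      simp_rw [Finset.mul_sum]
      rw [Finset.sum_comm]
      refine Finset.sum_congr rfl fun n _ => ?_
      simp only [csum, pow_succ, Matrix.mul_apply, Finset.mul_sum]
      rw [Finset.sum_comm]
      exact Finset.sum_congr rfl fun mm _ => Finset.sum_congr rfl fun j _ => mul_comm _ _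
    rw [hswap]
    have htel : ∑ n ∈ Finset.range L, csum Q n i - ∑ n ∈ Finset.range L, csum Q (n + 1) i
        = csum Q 0 i - csum Q L i := by
      rw [← Finset.sum_sub_distrib]
      exact Finset.sum_range_sub' (fun n => csum Q n i) L
    rw [htel, hcsum0]
    linarith [hcol i]

end aux

theorem leak_lemma {d : ℕ} (P : Matrix (Fin d) (Fin d) ℝ)
    (hnn : ∀ i j, 0 ≤ P i j)
    (hrow : ∀ i, ∑ j, P i j ≤ 1)
    (hinv : IsUnit (1 - P)) (s : Finset (Fin d))
    (Q : Matrix {x // x ∈ s} {x // x ∈ s} ℝ)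
    (hQ : ∀ i j, Q i j = P ↑i ↑j)
    (hle1 : ∀ n i, rsum Q n i ≤ 1)
    (hrsum_add : ∀ a b i, rsum Q (a + b) i = ∑ m, (Q ^ a) i m * rsum Q b m) :
    ∀ i, ∃ n, rsum Q n i < 1 := by
  classical
  by_contra hcon
  push_neg at hcon
  obtain ⟨i₀, hi₀⟩ := hcon
  have hi₀' : ∀ n, rsum Q n i₀ = 1 := fun n => le_antisymm (hle1 n i₀) (hi₀ n)
  set s' : Finset (Fin d) :=
    s.filter (fun j => ∀ (h : j ∈ s) (n : ℕ), rsum Q n ⟨j, h⟩ = 1) with hs'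
  have hmem : ∀ j, j ∈ s' ↔ j ∈ s ∧ ∀ (h : j ∈ s) (n : ℕ), rsum Q n ⟨j, h⟩ = 1 := by
    intro j; simp [hs']
  have hi₀s' : (i₀ : Fin d) ∈ s' := by
    rw [hmem]
    exact ⟨i₀.2, fun h n => by
      rw [show (⟨(i₀:Fin d), h⟩ : {x // x ∈ s}) = i₀ from Subtype.ext rfl]; exact hi₀' n⟩
  have key : ∀ i : {x // x ∈ s}, (↑i ∈ s') →
      (∀ j, j ∉ s' → P ↑i j = 0) ∧ ∑ j ∈ s', P ↑i j = 1 := by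
    intro i hi
    have hiQ : ∀ n, rsum Q n i = 1 := by
      rw [hmem] at hi
      intro n
      have := hi.2 i.2 n
      rwa [show (⟨(i:Fin d), i.2⟩ : {x // x ∈ s}) = i from Subtype.ext rfl] at this
    have hrow1 : ∑ k, Q i k = 1 := by
      have := hiQ 1
      simpa [rsum, pow_one] using this
    have hb : ∀ k : {x // x ∈ s}, (↑k ∉ s') → Q i k = 0 := by
      intro k hk
      have hkex : ∃ n, rsum Q n k < 1 := by
        rw [hmem] at hk
        push_neg at hk
        obtain ⟨h, n, hn⟩ := hk k.2
        rw [show (⟨(k:Fin d), h⟩ : {x // x ∈ s}) = k from Subtype.ext rfl] at hn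
        exact ⟨n, lt_of_le_of_ne (hle1 n k) hn⟩
      obtain ⟨n, hn⟩ := hkex
      by_contra hQik
      have hQik' : 0 < Q i k := lt_of_le_of_ne (by rw [hQ]; exact hnn _ _) (Ne.symm hQik)
      have h1 : rsum Q (1 + n) i = ∑ m, (Q ^ 1) i m * rsum Q n m := hrsum_add 1 n i
      have hlt : ∑ m, (Q ^ 1) i m * rsum Q n m < ∑ m, Q i m := by
        apply Finset.sum_lt_sum
        · intro m _
          rw [pow_one]
          calc Q i m * rsum Q n m ≤ Q i m * 1 :=
              mul_le_mul_of_nonneg_left (hle1 n m) (by rw [hQ]; exact hnn _ _)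
            _ = Q i m := mul_one _
        · exact ⟨k, Finset.mem_univ k, by rw [pow_one]; nlinarith⟩
      rw [hiQ (1 + n)] at h1
      rw [← h1, hrow1] at hlt
      exact lt_irrefl _ hlt
    have hsum_s : ∑ j ∈ s, P ↑i j = 1 := by
      rw [← hrow1]
      rw [← Finset.sum_coe_sort s (fun j => P ↑i j)]
      exact Finset.sum_congr rfl fun k _ => (hQ i k).symm
    have htot_le : ∑ j, P ↑i j ≤ 1 := hrow ↑i
    have hsub : ∑ j ∈ s, P ↑i j ≤ ∑ j, P ↑i j :=
      Finset.sum_le_sum_of_subset_of_nonneg (Finset.subset_univ s) (fun j _ _ => hnn _ _)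
    have htot : ∑ j, P ↑i j = 1 := le_antisymm htot_le (hsum_s ▸ hsub)
    have hout_s : ∀ j, j ∉ s → P ↑i j = 0 := by
      intro j hj
      have hzero : ∑ j ∈ Finset.univ \ s, P ↑i j = 0 := by
        have := Finset.sum_sdiff_eq_sub (Finset.subset_univ s) (f := fun j => P ↑i j)
        rw [htot, hsum_s] at this
        linarith
      exact (Finset.sum_eq_zero_iff_of_nonneg (fun j _ => hnn (↑i) j)).mp hzero j
        (Finset.mem_sdiff.mpr ⟨Finset.mem_univ j, hj⟩)
    have hc : ∀ j, j ∉ s' → P ↑i j = 0 := by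
      intro j hj
      by_cases hjs : j ∈ s
      · have := hb ⟨j, hjs⟩ hj
        rwa [hQ] at this
      · exact hout_s j hjs
    constructor
    · exact hc
    · have : ∑ j ∈ Finset.univ \ s', P ↑i j = 0 :=
        Finset.sum_eq_zero fun j hj => hc j (Finset.mem_sdiff.mp hj).2
      have h2 := Finset.sum_sdiff_eq_sub (Finset.subset_univ s') (f := fun j => P ↑i j)
      rw [htot, this] at h2
      linarith
  have hdet : (1 - P).det = 0 := by
    set e : {j // j ∈ s'} ⊕ {j // j ∉ s'} ≃ Fin d := Equiv.sumCompl (· ∈ s') with he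
    have hdet1 : ((1 - P).submatrix e e).det = (1 - P).det :=
      Matrix.det_submatrix_equiv_self e (1 - P)
    set A : Matrix {j // j ∈ s'} {j // j ∈ s'} ℝ := fun i j => (1 - P) ↑i ↑j with hA
    set C : Matrix {j // j ∉ s'} {j // j ∈ s'} ℝ := fun i j => (1 - P) ↑i ↑j with hC
    set D : Matrix {j // j ∉ s'} {j // j ∉ s'} ℝ := fun i j => (1 - P) ↑i ↑j with hD
    have hM : (1 - P).submatrix e e = Matrix.fromBlocks A 0 C D := by
      ext i j
      cases i with
      | inl i =>
        cases j with
        | inl j => rfl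
        | inr j =>
          simp only [Matrix.submatrix_apply, he, Equiv.sumCompl_apply_inl,
            Equiv.sumCompl_apply_inr, Matrix.fromBlocks_apply₁₂, Matrix.zero_apply]
          have hne : (i : Fin d) ≠ (j : Fin d) := by
            intro h
            exact j.2 (h ▸ i.2)
          have hPz : P ↑i ↑j = 0 := by
            have his : (i : Fin d) ∈ s := ((hmem ↑i).mp i.2).1
            exact ((key ⟨↑i, his⟩ i.2).1) ↑j j.2
          simp [Matrix.sub_apply, Matrix.one_apply_ne hne, hPz]
      | inr i =>
        cases j with
        | inl j => rfl
        | inr j => rfl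
    have hdet2 : (Matrix.fromBlocks A 0 C D).det = A.det * D.det :=
      Matrix.det_fromBlocks_zero₁₂ A C D
    have hAdet : A.det = 0 := by
      rw [← Matrix.exists_mulVec_eq_zero_iff]
      refine ⟨fun _ => 1, ?_, ?_⟩
      · intro h
        have := congrFun h ⟨↑i₀, hi₀s'⟩
        simp at this
      · funext i
        have his : (i : Fin d) ∈ s := ((hmem ↑i).mp i.2).1
        have hsum := (key ⟨↑i, his⟩ i.2).2
        simp only [Matrix.mulVec, dotProduct, mul_one, Pi.zero_apply]
        have h1 : ∑ j : {j // j ∈ s'}, (1 : Matrix (Fin d) (Fin d) ℝ) ↑i ↑j = 1 := by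
          have : ∀ j : {j // j ∈ s'}, (1 : Matrix (Fin d) (Fin d) ℝ) ↑i ↑j
              = if i = j then (1:ℝ) else 0 := by
            intro j
            rw [Matrix.one_apply]
            congr 1
            exact propext Subtype.ext_iff.symm
          simp_rw [this]
          simp
        have h2 : ∑ j : {j // j ∈ s'}, P ↑i ↑j = 1 := by
          rw [← Finset.sum_coe_sort s' (fun j => P ↑i j)] at hsum
          exact hsum
        simp only [hA, Matrix.sub_apply]
        rw [Finset.sum_sub_distrib, h1, h2, sub_self]
    rw [← hdet1, hM, hdet2, hAdet, zero_mul]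
  have := (Matrix.isUnit_iff_isUnit_det (1 - P)).mp hinv
  rw [hdet] at this
  exact (isUnit_iff_ne_zero.mp this) rfl

/-- If `P` is a `d×d` substochastic matrix (nonnegative entries, row sums at most `1`)
with `I - P` invertible, then `R = I - Pᵗ` is a completely-𝒮 matrix: every principal
submatrix `A` of `R` admits a strictly positive vector `v` with `A v > 0` entrywise. -/
theorem stmt1 {d : ℕ} (P : Matrix (Fin d) (Fin d) ℝ)
    (hnn : ∀ i j, 0 ≤ P i j)
    (hrow : ∀ i, ∑ j, P i j ≤ 1)
    (hinv : IsUnit (1 - P)) :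
    ∀ s : Finset (Fin d), s.Nonempty →
      ∃ v : {x // x ∈ s} → ℝ, (∀ i, 0 < v i) ∧
        ∀ i : {x // x ∈ s},
          0 < (((1 - Pᵀ).submatrix (fun i : {x // x ∈ s} => (i : Fin d))
                (fun j : {x // x ∈ s} => (j : Fin d))).mulVec v) i := by
  intro s hs
  haveI : Nonempty {x // x ∈ s} := ⟨⟨hs.choose, hs.choose_spec⟩⟩
  set Q : Matrix {x // x ∈ s} {x // x ∈ s} ℝ := fun i j => P ↑i ↑j with hQdef
  have hQ : ∀ i j, Q i j = P ↑i ↑j := fun i j => rfl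
  have hQnn : ∀ i j, 0 ≤ Q i j := fun i j => hnn _ _
  have hQrow : ∀ i, ∑ j, Q i j ≤ 1 := by
    intro i
    calc ∑ j, Q i j = ∑ j ∈ s, P ↑i j := by
          rw [← Finset.sum_coe_sort s (fun j => P ↑i j)]
      _ ≤ ∑ j, P ↑i j := Finset.sum_le_sum_of_subset_of_nonneg
          (Finset.subset_univ s) (fun j _ _ => hnn _ _)
      _ ≤ 1 := hrow ↑i
  have hrow1 : ∀ i, rsum Q 1 i ≤ 1 := by
    intro i; simpa [rsum] using hQrow i
  have hle1 := rsum_le_one Q hQnn hrow1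
  have hleak := leak_lemma P hnn hrow hinv s Q hQ hle1 (rsum_add Q)
  obtain ⟨v, hv, hvQ⟩ := aux_main Q hQnn hQrow hleak
  refine ⟨v, hv, ?_⟩
  intro i
  have hgoal : (((1 - Pᵀ).submatrix (fun i : {x // x ∈ s} => (i : Fin d))
      (fun j : {x // x ∈ s} => (j : Fin d))).mulVec v) i
      = v i - ∑ j, Q j i * v j := by
    simp only [Matrix.mulVec, dotProduct, Matrix.submatrix_apply, Matrix.sub_apply,
      Matrix.transpose_apply, sub_mul]
    rw [Finset.sum_sub_distrib]
    have h1 : ∑ j : {x // x ∈ s}, (1 : Matrix (Fin d) (Fin d) ℝ) ↑i ↑j * v j = v i := by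
      have he : ∀ j : {x // x ∈ s}, (1 : Matrix (Fin d) (Fin d) ℝ) ↑i ↑j * v j
          = if i = j then v j else 0 := by
        intro j
        rw [Matrix.one_apply]
        by_cases h : i = j
        · simp [h]
        · have : (i : Fin d) ≠ (j : Fin d) := fun hh => h (Subtype.ext hh)
          simp [h, this]
      simp_rw [he]
      simp
    rw [h1]
  rw [hgoal]
  exact hvQ i
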